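/- (1-dimensional algebraic Poincaré lemma, part 1) Let A = k[u₀, u₁, u₂, …] be the polynomial ring over a field k of characteristic 0 in countably many variables, and let ∂ be the k-derivation determined by ∂(u_j) = u_{j+1} ('total derivative'). Define the Euler operator E : A → A by E(f) = Σ_{j≥0} (−1)^j ∂^j ( ∂f/∂u_j ). Then E annihilates every total derivative: E(∂f) = 0 for all f ∈ A. -/
import Mathlib

noncomputable def totalDer (k : Type*) [CommRing k] :
    Derivation k (MvPolynomial ℕ k) (MvPolynomial ℕ k) :=
  MvPolynomial.mkDerivation k fun j => MvPolynomial.X (j + 1)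

open MvPolynomial

lemma totalDer_X (k : Type*) [CommRing k] (j : ℕ) :
    totalDer k (X j : MvPolynomial ℕ k) = X (j + 1) :=
  mkDerivation_X k _ j

lemma bracket_succ (k : Type*) [CommRing k] (j : ℕ) :
    ⁅(pderiv (j+1) : Derivation k (MvPolynomial ℕ k) _), totalDer k⁆ = pderiv j := by
  apply derivation_ext
  intro i
  simp only [Derivation.commutator_apply, totalDer_X, pderiv_X, Pi.single_apply]
  by_cases h : i = j <;> split_ifs <;> simp_all

lemma bracket_zero (k : Type*) [CommRing k] :
    ⁅(pderiv 0 : Derivation k (MvPolynomial ℕ k) _), totalDer k⁆ = 0 := by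
  apply derivation_ext
  intro i
  simp only [Derivation.commutator_apply, totalDer_X, pderiv_X, Pi.single_apply,
    Derivation.coe_zero, Pi.zero_apply]
  split_ifs <;> simp_all

noncomputable def eulerOp (k : Type*) [CommRing k] (f : MvPolynomial ℕ k) :
    MvPolynomial ℕ k :=
  ∑ᶠ j : ℕ, ((-1 : ℤ) ^ j) • ((fun g => totalDer k g)^[j] (MvPolynomial.pderiv j f))

lemma iter_totalDer_add (k : Type*) [CommRing k] (n : ℕ) (x y : MvPolynomial ℕ k) :
    (fun g => totalDer k g)^[n] (x + y)
      = (fun g => totalDer k g)^[n] x + (fun g => totalDer k g)^[n] y := by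
  induction n generalizing x y with
  | zero => simp
  | succ n ih => simp [Function.iterate_succ_apply, ih, map_add]

lemma iter_totalDer_zero (k : Type*) [CommRing k] (n : ℕ) :
    (fun g => totalDer k g)^[n] (0 : MvPolynomial ℕ k) = 0 := by
  induction n with
  | zero => simp
  | succ n ih => simp [Function.iterate_succ_apply, ih, map_zero]

lemma pderiv_succ_totalDer (k : Type*) [CommRing k] (j : ℕ) (f : MvPolynomial ℕ k) :
    pderiv (j+1) (totalDer k f) = totalDer k (pderiv (j+1) f) + pderiv j f := by
  have h := congrArg (fun D => D f) (bracket_succ k j)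
  simp only [Derivation.commutator_apply] at h
  linear_combination (norm := module) h

lemma pderiv_zero_totalDer (k : Type*) [CommRing k] (f : MvPolynomial ℕ k) :
    pderiv 0 (totalDer k f) = totalDer k (pderiv 0 f) := by
  have h := congrArg (fun D => D f) (bracket_zero k)
  simp only [Derivation.commutator_apply] at h
  simp only [Derivation.zero_apply] at h
  exact sub_eq_zero.mp h

theorem stmt_10 (k : Type*) [Field k] [CharZero k] (f : MvPolynomial ℕ k) :
    eulerOp k (totalDer k f) = 0 := by
  classical
  set D := totalDer k with hD
  set g := D f with hg
  set term : ℕ → MvPolynomial ℕ k :=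
    fun j => ((-1 : ℤ) ^ j) • ((fun x => D x)^[j] (pderiv j g)) with hterm
  set a : ℕ → MvPolynomial ℕ k :=
    fun j => ((-1 : ℤ) ^ j) • ((fun x => D x)^[j+1] (pderiv j f)) with ha
  set B := (f.vars ∪ g.vars).sup id with hB
  set M := B + 1 with hM
  have hsub : (Function.support term) ⊆ ↑(Finset.range (M + 1)) := by
    intro j hj
    simp only [Function.mem_support] at hj
    simp only [Finset.coe_range, Set.mem_Iio]
    by_contra hlt
    push_neg at hlt
    have hjg : j ∉ g.vars := by
      intro hmem
      have : j ≤ B := Finset.le_sup (f := id) (Finset.mem_union_right _ hmem)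
      omega
    have : pderiv j g = 0 := pderiv_eq_zero_of_notMem_vars hjg
    apply hj
    simp [hterm, this, iter_totalDer_zero]
  have hsum : eulerOp k g = ∑ j ∈ Finset.range (M + 1), term j :=
    finsum_eq_sum_of_support_subset _ hsub
  have hterm0 : term 0 = a 0 := by
    simp only [hterm, ha, pow_zero, one_smul, Function.iterate_zero, Function.iterate_one, id]
    exact pderiv_zero_totalDer k f
  have htermsucc : ∀ j, term (j + 1) = a (j + 1) - a j := by
    intro j
    have h1 : pderiv (j+1) g = D (pderiv (j+1) f) + pderiv j f :=
      pderiv_succ_totalDer k j f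
    rw [hterm, ha]
    simp only []
    rw [h1, iter_totalDer_add]
    have h2 : (fun x => D x)^[j+1] (D (pderiv (j+1) f))
        = (fun x => D x)^[j+2] (pderiv (j+1) f) :=
      (Function.iterate_succ_apply (fun x => D x) (j+1) (pderiv (j+1) f)).symm
    rw [h2]
    have h3 : ((-1 : ℤ) ^ (j+1)) = -((-1 : ℤ) ^ j) := by ring
    rw [smul_add, h3]
    module
  have hMf : pderiv M f = 0 := by
    apply pderiv_eq_zero_of_notMem_vars
    intro hmem
    have : M ≤ B := Finset.le_sup (f := id) (Finset.mem_union_left _ hmem)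
    omega
  have haM : a M = 0 := by
    rw [ha]
    simp only []
    rw [hMf, iter_totalDer_zero, smul_zero]
  rw [hsum, Finset.sum_range_succ']
  simp only [htermsucc, hterm0, Finset.sum_range_sub]
  rw [sub_add_cancel, haM]
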